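/- Let g : Fin n → ℝ and f : Fin m → ℝ, and let ŝ i = -min(g i, 0). Then (∏ i, ŝ i) · (∏ j, f j) = 0 if and only if the implication ((∀ i, g i < 0) → (∃ j, f j = 0)) holds. -/
import Mathlib


theorem stmt_9 {n m : ℕ} (hn : 1 ≤ n) (hm : 1 ≤ m)
    (g : Fin n → ℝ) (f : Fin m → ℝ)
    (s : Fin n → ℝ) (hs : ∀ i, s i = -min (g i) 0) :
    (∏ i, s i) * (∏ j, f j) = 0 ↔ ((∀ i, g i < 0) → ∃ j, f j = 0) := by
  have hsz : ∀ i, s i = 0 ↔ 0 ≤ g i := by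
    intro i
    rw [hs i]
    constructor
    · intro h
      by_contra hlt
      push_neg at hlt
      rw [min_eq_left hlt.le] at h
      linarith
    · intro h
      rw [min_eq_right h]
      ring
  rw [mul_eq_zero, Finset.prod_eq_zero_iff, Finset.prod_eq_zero_iff]
  constructor
  · rintro (⟨i, _, hi⟩ | ⟨j, _, hj⟩) hall
    · exact absurd ((hsz i).mp hi) (not_le.mpr (hall i))
    · exact ⟨j, hj⟩
  · intro h
    by_cases hall : ∀ i, g i < 0
    · obtain ⟨j, hj⟩ := h hall
      exact Or.inr ⟨j, Finset.mem_univ j, hj⟩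
    · push_neg at hall
      obtain ⟨i, hi⟩ := hall
      exact Or.inl ⟨i, Finset.mem_univ i, (hsz i).mpr hi⟩
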